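/- Let {ρ_t}_{t ∈ ℕ} be a dynamic conditional risk mapping on a filtered probability space that is time consistent, i.e. for all bounded Y, Z and t: ρ_{t+1}(Y) ≤ ρ_{t+1}(Z) a.s. implies ρ_t(Y) ≤ ρ_t(Z) a.s. Then the recursion ρ_s = ρ_s ∘ ρ_t holds for all 0 ≤ s ≤ t: ρ_s(Z) = ρ_s(ρ_t(Z)) a.s. for all bounded Z. -/
import Mathlib


open MeasureTheory

/-- A time-consistent dynamic conditional risk mapping satisfies the recursion
`ρ_s = ρ_s ∘ ρ_t` for `s ≤ t`. -/
theorem stmt12 {Ω : Type*} {m : MeasurableSpace Ω} (ℱ : ℕ → MeasurableSpace Ω)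
    (hℱ : ∀ t, ℱ t ≤ m)
    (μ : Measure Ω) [IsProbabilityMeasure μ]
    (ρ : ℕ → (Ω → ℝ) → (Ω → ℝ))
    (hmeas : ∀ t Z, Measurable[ℱ t] (ρ t Z))
    (hbdd : ∀ t (Z : Ω → ℝ), (∃ C, ∀ ω, |Z ω| ≤ C) → ∃ C, ∀ ω, |ρ t Z ω| ≤ C)
    (hnorm : ∀ t, ρ t 0 =ᵐ[μ] 0)
    (htrans : ∀ t (Z Z' : Ω → ℝ), Measurable Z → (∃ C, ∀ ω, |Z ω| ≤ C) →
      Measurable[ℱ t] Z' → (∃ C, ∀ ω, |Z' ω| ≤ C) → ρ t (Z + Z') =ᵐ[μ] Z' + ρ t Z)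
    (hmono : ∀ t (Z Z' : Ω → ℝ), Measurable Z → (∃ C, ∀ ω, |Z ω| ≤ C) →
      Measurable Z' → (∃ C, ∀ ω, |Z' ω| ≤ C) → Z ≤ᵐ[μ] Z' → ρ t Z ≤ᵐ[μ] ρ t Z')
    (hTC : ∀ t (Y Z : Ω → ℝ), Measurable Y → (∃ C, ∀ ω, |Y ω| ≤ C) →
      Measurable Z → (∃ C, ∀ ω, |Z ω| ≤ C) →
      ρ (t + 1) Y ≤ᵐ[μ] ρ (t + 1) Z → ρ t Y ≤ᵐ[μ] ρ t Z) :
    ∀ s t : ℕ, s ≤ t → ∀ Z : Ω → ℝ, Measurable Z → (∃ C, ∀ ω, |Z ω| ≤ C) →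
      ρ s Z =ᵐ[μ] ρ s (ρ t Z) := by
  -- measurability of ρ t Z w.r.t. the big σ-algebra
  have hmeas' : ∀ t Z, Measurable (ρ t Z) := fun t Z => (hmeas t Z).mono (hℱ t) le_rfl
  have h0bdd : ∃ C, ∀ ω : Ω, |(0 : Ω → ℝ) ω| ≤ C := ⟨0, by simp⟩
  -- idempotence: ρ t (ρ t Z) =ᵐ ρ t Z
  have hidem : ∀ t (Z : Ω → ℝ), (∃ C, ∀ ω, |Z ω| ≤ C) →
      ρ t (ρ t Z) =ᵐ[μ] ρ t Z := by
    intro t Z hZb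
    have hb := hbdd t Z hZb
    have h1 := htrans t 0 (ρ t Z) measurable_zero h0bdd (hmeas t Z) hb
    have h2 : (0 : Ω → ℝ) + ρ t Z = ρ t Z := zero_add _
    rw [h2] at h1
    refine h1.trans ?_
    filter_upwards [hnorm t] with ω hω
    simp [hω]
  -- a.e. congruence for ρ via monotonicity
  have hcong : ∀ t (Z Z' : Ω → ℝ), Measurable Z → (∃ C, ∀ ω, |Z ω| ≤ C) →
      Measurable Z' → (∃ C, ∀ ω, |Z' ω| ≤ C) → Z =ᵐ[μ] Z' → ρ t Z =ᵐ[μ] ρ t Z' := by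
    intro t Z Z' hZ hZb hZ' hZ'b h
    exact (hmono t Z Z' hZ hZb hZ' hZ'b h.le).antisymm
      (hmono t Z' Z hZ' hZ'b hZ hZb h.symm.le)
  -- one-step recursion
  have hstep : ∀ t (Z : Ω → ℝ), Measurable Z → (∃ C, ∀ ω, |Z ω| ≤ C) →
      ρ t Z =ᵐ[μ] ρ t (ρ (t + 1) Z) := by
    intro t Z hZ hZb
    have hb := hbdd (t + 1) Z hZb
    have h1 := hidem (t + 1) Z hZb
    exact (hTC t Z (ρ (t + 1) Z) hZ hZb (hmeas' _ _) hb h1.symm.le).antisymm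
      (hTC t (ρ (t + 1) Z) Z (hmeas' _ _) hb hZ hZb h1.le)
  intro s t hst
  induction t, hst using Nat.le_induction with
  | base =>
    intro Z _ hZb
    exact (hidem s Z hZb).symm
  | succ t hst ih =>
    intro Z hZ hZb
    have hb := hbdd (t + 1) Z hZb
    have hbt := hbdd t Z hZb
    calc ρ s Z =ᵐ[μ] ρ s (ρ t Z) := ih Z hZ hZb
      _ =ᵐ[μ] ρ s (ρ t (ρ (t + 1) Z)) :=
        hcong s (ρ t Z) (ρ t (ρ (t + 1) Z)) (hmeas' _ _) hbt (hmeas' _ _)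
          (hbdd t _ hb) (hstep t Z hZ hZb)
      _ =ᵐ[μ] ρ s (ρ (t + 1) Z) := (ih (ρ (t + 1) Z) (hmeas' _ _) hb).symm
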